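/- Let Q = (q₁,…,q_m) be any word in the simple reflections S, let Q' = (q₂,…,q_m, w₀q₁w₀) be its jumping word, and let σ : [m] → [m] be the cyclic shift given by σ(i) = i−1 for i ≥ 2 and σ(1) = m. Then for any subset I ⊆ [m], the subword of Q indexed by [m]∖I is a reduced word for w₀ if and only if the subword of Q' indexed by [m]∖σ(I) is a reduced word for w₀. -/

import Mathlib

open scoped Classical

noncomputable section

namespace CP

variable {B : Type} [DecidableEq B] [Fintype B] [Nonempty B]
variable {W : Type} [Group W]

/-- An arbitrary element of `B`, used as a junk value for `List.getD`. -/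
def arb (B : Type) [Nonempty B] : B := Classical.arbitrary B

/-- The bilinear form of the standard geometric representation of a Coxeter system:
`⟨αᵢ, αⱼ⟩ = -cos (π / Mᵢⱼ)`, extended bilinearly. -/
def bil (M : CoxeterMatrix B) (u v : B → ℝ) : ℝ :=
  ∑ i, ∑ j, u i * v j * (-(Real.cos (Real.pi / (M i j))))

/-- The simple roots: the standard basis vectors of `V = ℝ^B`. -/
def sroot (i : B) : B → ℝ := Pi.single i 1

/-- The root system: the orbit of the simple roots under `W`. -/
def rootSystem (π : Representation ℝ W (B → ℝ)) : Set (B → ℝ) :=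
  {v | ∃ (w : W) (i : B), v = π w (sroot i)}

/-- The positive roots: roots with non-negative coordinates on the simple roots. -/
def posRoots (π : Representation ℝ W (B → ℝ)) : Set (B → ℝ) :=
  {v ∈ rootSystem π | ∀ i, 0 ≤ v i}

/-- The almost positive roots: positive roots plus negatives of simple roots. -/
def almostPos (π : Representation ℝ W (B → ℝ)) : Set (B → ℝ) :=
  posRoots π ∪ Set.range (fun i => -sroot i)

variable {M : CoxeterMatrix B}

/-- `l` is a reduced word for `w`. -/
def IsRW (cs : CoxeterSystem M W) (w : W) (l : List B) : Prop :=
  cs.wordProd l = w ∧ l.length = cs.length w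

/-- The letter of the infinite word `c^∞` at position `t` (`0`-indexed). -/
def cInf [Nonempty B] (cword : List B) (t : ℕ) : B := cword.getD (t % cword.length) (arb B)

/-- `f ≤ g` in the lexicographic order on sequences of positions. -/
def LexLE {N : ℕ} (f g : Fin N → ℕ) : Prop :=
  f = g ∨ ∃ k, (∀ l, l < k → f l = g l) ∧ f k < g k

/-- The subword of `Q` indexed by the complement of `I` (positions are `0`-indexed). -/
def complWord [Nonempty B] (Q : List B) (I : Finset ℕ) : List B :=
  ((List.range Q.length).filter (· ∉ I)).map (fun k => Q.getD k (arb B))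

/-- `I` is a `c`-cluster of the word `Q`: the complementary subword is a reduced word
for the longest element `w₀`. -/
def IsCluster (cs : CoxeterSystem M W) (w₀ : W) (Q : List B) (I : Finset ℕ) : Prop :=
  I ⊆ Finset.range Q.length ∧ IsRW cs w₀ (complWord Q I)

/-- The root function `r(I, j)`. -/
def rootFn (cs : CoxeterSystem M W) (π : Representation ℝ W (B → ℝ))
    (Q : List B) (I : Finset ℕ) (j : ℕ) : B → ℝ :=
  π (cs.wordProd (((List.range j).filter (· ∉ I)).map (fun x => Q.getD x (arb B))))
    (sroot (Q.getD j (arb B)))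

/-- `ρ` is a family of coefficients expanding `r(I, j)` on the root configuration
`R(I) = (r(I, i))_{i ∈ I}`. -/
def IsExpansion (cs : CoxeterSystem M W) (π : Representation ℝ W (B → ℝ))
    (Q : List B) (I : Finset ℕ) (j : ℕ) (ρ : ℕ → ℝ) : Prop :=
  rootFn cs π Q I j = ∑ i ∈ I, ρ i • rootFn cs π Q I i

/-- The rotation map `τ_c` on positions of the word `Q` (`0`-indexed): the position of the next
occurrence of the letter `q_i` if it exists, and the first occurrence of `η (q_i) = w₀ q_i w₀`
otherwise. -/
def rot [Nonempty B] (Q : List B) (η : B → B) (i : ℕ) : ℕ :=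
  if h : ∃ j, j < Q.length ∧ i < j ∧ Q.getD j (arb B) = Q.getD i (arb B) then Nat.find h
  else if h2 : ∃ j, j < Q.length ∧ Q.getD j (arb B) = η (Q.getD i (arb B)) then Nat.find h2
  else i

/-- The map `ϑ_c` from positions of the word `Q_c = cword ++ sw` to almost positive roots. -/
def theta (cs : CoxeterSystem M W) (π : Representation ℝ W (B → ℝ))
    (cword sw : List B) (i : ℕ) : B → ℝ :=
  if i < cword.length then -sroot (cword.getD i (arb B))
  else π (cs.wordProd (sw.take (i - cword.length))) (sroot (sw.getD (i - cword.length) (arb B)))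

/-- The rotation map `τ_c` on almost positive roots. -/
def rotRoot (cs : CoxeterSystem M W) (π : Representation ℝ W (B → ℝ))
    (cword : List B) (v : B → ℝ) : B → ℝ :=
  if h : ∃ k : Fin cword.length, v = -sroot (cword.get k) then
    π (cs.wordProd (cword.take (Classical.choose h).1)) (sroot (cword.get (Classical.choose h)))
  else if h2 : ∃ k : Fin cword.length,
      v = π (cs.wordProd (cword.drop ((k : ℕ) + 1)).reverse) (sroot (cword.get k)) then
    -sroot (cword.get (Classical.choose h2))
  else π (cs.wordProd cword) v

/-- One elementary commutation of two consecutive commuting letters. -/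
def CommStep (cs : CoxeterSystem M W) (u v : List B) : Prop :=
  ∃ (x y : List B) (s t : B), cs.simple s * cs.simple t = cs.simple t * cs.simple s ∧
    u = x ++ s :: t :: y ∧ v = x ++ t :: s :: y

/-- The cyclic shift on positions accompanying the jump of the first letter of a word with
`m` letters: `σ(k) = k - 1` for `k ≥ 1`, and `σ(0) = m - 1` (positions are `0`-indexed). -/
def shift (m : ℕ) (k : ℕ) : ℕ := if k = 0 then m - 1 else k - 1

theorem statement_7
    {B : Type} [DecidableEq B] [Fintype B] [Nonempty B]
    {M : CoxeterMatrix B} {W : Type} [Group W] [Finite W]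
    (cs : CoxeterSystem M W)
    (w₀ : W)
    (hw₀max : ∀ w : W, cs.length w ≤ cs.length w₀)
    (hw₀uniq : ∀ w : W, cs.length w = cs.length w₀ → w = w₀)
    (q : B) (l : List B) (b : B) (hb : cs.simple b = w₀ * cs.simple q * w₀)
    (I : Finset ℕ) (hIm : I ⊆ Finset.range (q :: l).length) :
    IsRW cs w₀ (complWord (q :: l) I) ↔
      IsRW cs w₀ (complWord (l ++ [b]) (I.image (shift (q :: l).length))) := by
  set n := l.length with hn
  set J := I.image (shift (q :: l).length) with hJ
  have hm : (q :: l).length = n + 1 := rfl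
  have hmem : ∀ k, k < n → (k ∈ J ↔ k + 1 ∈ I) := by
    intro k hk
    constructor
    · rintro hkJ
      rw [hJ, Finset.mem_image] at hkJ
      obtain ⟨i, hi, hik⟩ := hkJ
      unfold shift at hik
      rw [hm] at hik
      split_ifs at hik with h0
      · omega
      · have : i = k + 1 := by omega
        rwa [← this]
    · intro h
      rw [hJ, Finset.mem_image]
      exact ⟨k + 1, h, by unfold shift; simp⟩
  have hmemn : (n ∈ J ↔ 0 ∈ I) := by
    constructor
    · rintro hkJ
      rw [hJ, Finset.mem_image] at hkJ
      obtain ⟨i, hi, hik⟩ := hkJ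
      have := hIm hi
      rw [Finset.mem_range, hm] at this
      unfold shift at hik
      split_ifs at hik with h0
      · exact h0 ▸ hi
      · omega
    · intro h
      rw [hJ, Finset.mem_image]
      refine ⟨0, h, by unfold shift; rw [hm]; simp⟩
  set X : List B := ((List.range n).filter (fun k => decide ((k+1) ∉ I))).map (fun k => l.getD k (arb B)) with hX
  have key1 : complWord (q::l) I = (if (0:ℕ) ∈ I then [] else [q]) ++ X := by
    unfold complWord
    rw [hm, List.range_succ_eq_map, List.filter_cons, List.filter_map]
    by_cases h0 : (0:ℕ) ∈ I <;>
      simp [h0, List.map_map, hX, Function.comp_def, List.getD]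
  have key2 : complWord (l ++ [b]) J = X ++ (if (0:ℕ) ∈ I then [] else [b]) := by
    unfold complWord
    rw [show (l ++ [b]).length = n+1 by simp [hn], List.range_succ, List.filter_append,
      List.map_append]
    congr 1
    · have hfc : (List.range n).filter (fun k => decide (k ∉ J)) =
          (List.range n).filter (fun k => decide ((k+1) ∉ I)) := by
        apply List.filter_congr
        intro k hk
        rw [List.mem_range] at hk
        simp [hmem k hk]
      rw [hfc, hX]
      apply List.map_congr_left
      intro k hk
      rw [List.mem_filter, List.mem_range] at hk
      rw [List.getD_eq_getElem?_getD, List.getD_eq_getElem?_getD, List.getElem?_append_left hk.1]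
    · simp only [List.filter_singleton]
      by_cases h0 : (0:ℕ) ∈ I <;>
        simp [h0, hmemn, List.getD_eq_getElem?_getD, List.getElem?_concat_length,
          show (l ++ [b])[n]? = some b by simp [hn]]
  rw [key1, key2]
  by_cases h0 : (0:ℕ) ∈ I
  · simp [h0]
  · simp only [h0, if_false, List.singleton_append]
    have hw2 : w₀ * w₀ = 1 := by
      have := hw₀uniq w₀⁻¹ (cs.length_inv w₀)
      nth_rewrite 1 [← this]; simp
    have hiff : ∀ P : W, cs.simple q * P = w₀ ↔ P * cs.simple b = w₀ := by
      intro P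
      rw [← eq_inv_mul_iff_mul_eq, cs.inv_simple, ← eq_mul_inv_iff_mul_eq, cs.inv_simple, hb,
        show w₀ * (w₀ * cs.simple q * w₀) = w₀ * w₀ * (cs.simple q * w₀) by group, hw2, one_mul]
    simp only [IsRW, cs.wordProd_cons, cs.wordProd_append, cs.wordProd_singleton,
      cs.wordProd_nil, mul_one, List.length_cons, List.length_append, List.length_singleton,
      List.length_nil, zero_add]
    rw [hiff]

end CP
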